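/- Let s ≥ 1 be an integer and let R be a finite tree with no induced subgraph isomorphic to sP₁ + P₃ (the disjoint union of s isolated vertices and a 3-vertex path). Suppose R has a vertex r of degree at least 3 such that some subtree obtained by deleting r contains a vertex of degree at least 2 in that subtree. Then R has at most 4s − 2 vertices. -/

import Mathlib

open SimpleGraph

/-- The graph `sP₁ + P₃`: the disjoint union of `s` isolated vertices and a path on
3 vertices. -/
def sP1P3 (s : ℕ) : SimpleGraph (Fin s ⊕ Fin 3) :=
  SimpleGraph.fromRel (fun a b =>
    ∃ i j : Fin 3, a = Sum.inr i ∧ b = Sum.inr j ∧ (i : ℕ) + 1 = (j : ℕ))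

/-- `G` is `H`-free: no induced subgraph of `G` is isomorphic to `H`. -/
def HFree {W V : Type*} (H : SimpleGraph W) (G : SimpleGraph V) : Prop :=
  IsEmpty (H ↪g G)

namespace Stmt5Aux

variable {V : Type*}

lemma sP1P3_adj_inl (s : ℕ) (i : Fin s) (a : Fin s ⊕ Fin 3) :
    ¬ (sP1P3 s).Adj (Sum.inl i) a := by
  intro h
  rw [sP1P3, SimpleGraph.fromRel_adj] at h
  obtain ⟨-, h | h⟩ := h <;> obtain ⟨i', j', h1, h2, -⟩ := h <;> simp_all

lemma sP1P3_adj_inr (s : ℕ) (i j : Fin 3) :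
    (sP1P3 s).Adj (Sum.inr i) (Sum.inr j) ↔ ((i : ℕ) + 1 = j ∨ (j : ℕ) + 1 = i) := by
  rw [sP1P3, SimpleGraph.fromRel_adj]
  constructor
  · rintro ⟨-, h | h⟩ <;> obtain ⟨i', j', h1, h2, h3⟩ := h
    · injection h1 with h1; injection h2 with h2; subst h1; subst h2; exact Or.inl h3
    · injection h1 with h1; injection h2 with h2; subst h1; subst h2; exact Or.inr h3
  · intro h
    refine ⟨?_, ?_⟩
    · intro hc
      injection hc with hc
      subst hc
      omega
    · rcases h with h | h
      · exact Or.inl ⟨i, j, rfl, rfl, h⟩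
      · exact Or.inr ⟨j, i, rfl, rfl, h⟩

/-- Key lemma: in an `sP₁+P₃`-free graph, an independent set avoiding the closed
neighborhood of an induced path `x-y-z` has fewer than `s` elements. -/
lemma key [Fintype V] (s : ℕ) (R : SimpleGraph V)
    (hfree : HFree (sP1P3 s) R) (x y z : V)
    (hxy : R.Adj x y) (hyz : R.Adj y z) (hxz : ¬ R.Adj x z) (hxzne : x ≠ z)
    (A : Set V)
    (hind : ∀ a ∈ A, ∀ b ∈ A, a ≠ b → ¬ R.Adj a b)
    (hav : ∀ w ∈ A, w ≠ x ∧ w ≠ y ∧ w ≠ z ∧ ¬ R.Adj w x ∧ ¬ R.Adj w y ∧ ¬ R.Adj w z) :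
    A.ncard < s := by
  classical
  by_contra hcon
  push_neg at hcon
  obtain ⟨B, hBA, hBcard⟩ := Set.exists_subset_card_eq hcon
  haveI : Fintype B := (B.toFinite).fintype
  have hBcard' : Fintype.card B = s := by
    rw [← Nat.card_eq_fintype_card, Nat.card_coe_set_eq, hBcard]
  let e : B ≃ Fin s := Fintype.equivFinOfCardEq hBcard'
  let g : Fin s → V := fun i => ((e.symm i : B) : V)
  have hginj : Function.Injective g := by
    intro i j hij
    have := Subtype.ext hij
    exact e.symm.injective this
  have hgA : ∀ i, g i ∈ A := fun i => hBA (e.symm i).2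
  have hvecne : ∀ i j : Fin 3, i ≠ j → (![x, y, z] i ≠ ![x, y, z] j) := by
    intro i j hij h
    fin_cases i <;> fin_cases j <;>
      first
        | exact hij rfl
        | exact hxy.ne h
        | exact hxy.ne' h
        | exact hyz.ne h
        | exact hyz.ne' h
        | exact hxzne h
        | exact hxzne h.symm
  have hgne : ∀ (i : Fin s) (j : Fin 3), g i ≠ ![x, y, z] j := by
    intro i j
    obtain ⟨h1, h2, h3, -⟩ := hav _ (hgA i)
    fin_cases j <;> simpa
  have hgnadj : ∀ (i : Fin s) (j : Fin 3), ¬ R.Adj (g i) (![x, y, z] j) := by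
    intro i j
    obtain ⟨-, -, -, h1, h2, h3⟩ := hav _ (hgA i)
    fin_cases j <;> simpa
  have hAA : ∀ i j : Fin s, ¬ R.Adj (g i) (g j) := by
    intro i j h
    by_cases hij : i = j
    · subst hij; exact R.loopless.irrefl _ h
    · exact hind _ (hgA i) _ (hgA j) (fun hc => hij (hginj hc)) h
  let f : Fin s ⊕ Fin 3 → V := Sum.elim g ![x, y, z]
  have hfinj : Function.Injective f := by
    rintro (i | i) (j | j) h
    · exact congrArg Sum.inl (hginj h)
    · exact absurd h (hgne i j)
    · exact absurd h.symm (hgne j i)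
    · refine congrArg Sum.inr ?_
      by_contra hij
      exact hvecne i j hij h
  have hmap : ∀ a b : Fin s ⊕ Fin 3, R.Adj (f a) (f b) ↔ (sP1P3 s).Adj a b := by
    rintro (i | i) (j | j)
    · simp only [f, Sum.elim_inl]
      exact iff_of_false (hAA i j) (sP1P3_adj_inl s i _)
    · simp only [f, Sum.elim_inl, Sum.elim_inr]
      exact iff_of_false (hgnadj i j) (sP1P3_adj_inl s i _)
    · simp only [f, Sum.elim_inl, Sum.elim_inr]
      refine iff_of_false (fun h => (hgnadj j i) h.symm) ?_
      intro h
      exact sP1P3_adj_inl s j _ h.symm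
    · simp only [f, Sum.elim_inr]
      rw [sP1P3_adj_inr]
      fin_cases i <;> fin_cases j
      · exact iff_of_false (R.loopless.irrefl x) (by decide)
      · exact iff_of_true hxy (by decide)
      · exact iff_of_false hxz (by decide)
      · exact iff_of_true hxy.symm (by decide)
      · exact iff_of_false (R.loopless.irrefl y) (by decide)
      · exact iff_of_true hyz (by decide)
      · exact iff_of_false (fun h => hxz h.symm) (by decide)
      · exact iff_of_true hyz.symm (by decide)
      · exact iff_of_false (R.loopless.irrefl z) (by decide)
  exact hfree.false ⟨⟨f, hfinj⟩, (hmap _ _)⟩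

/-- Proper 2-coloring of a tree. -/
lemma tree_coloring (R : SimpleGraph V) (htree : R.IsTree) :
    ∃ c : V → Bool, ∀ u v, R.Adj u v → c u ≠ c v := by
  classical
  obtain ⟨r₀⟩ := htree.isConnected.nonempty
  have hpath_eq : ∀ {a b : V} (q1 q2 : R.Walk a b), q1.IsPath → q2.IsPath → q1 = q2 :=
    fun q1 q2 h1 h2 => (htree.existsUnique_path _ _).unique h1 h2
  let p : ∀ w : V, R.Walk r₀ w := fun w => (htree.existsUnique_path r₀ w).exists.choose
  have hp : ∀ w, (p w).IsPath := fun w => (htree.existsUnique_path r₀ w).exists.choose_spec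
  have step : ∀ u v, R.Adj u v →
      (p v).length = (p u).length + 1 ∨ (p u).length = (p v).length + 1 := by
    intro u v huv
    by_cases hmem : v ∈ (p u).support
    · right
      have h1 : ((p u).takeUntil v hmem).IsPath := (hp u).takeUntil hmem
      have h2 : ((p u).dropUntil v hmem).IsPath := (hp u).dropUntil hmem
      have e1 : (SimpleGraph.Walk.cons huv.symm SimpleGraph.Walk.nil : R.Walk v u).IsPath := by
        simp [SimpleGraph.Walk.cons_isPath_iff, huv.ne']
      have h3 : (p u).dropUntil v hmem = SimpleGraph.Walk.cons huv.symm SimpleGraph.Walk.nil :=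
        hpath_eq _ _ h2 e1
      have h4 : (p u).takeUntil v hmem = p v := hpath_eq _ _ h1 (hp v)
      have h5 := (p u).take_spec hmem
      have h6 := congrArg SimpleGraph.Walk.length h5
      rw [SimpleGraph.Walk.length_append, h3, h4] at h6
      simp at h6
      omega
    · left
      have hq : ((p u).concat huv).IsPath := by
        rw [SimpleGraph.Walk.isPath_def, SimpleGraph.Walk.support_concat]
        rw [List.nodup_append]
        refine ⟨(hp u).2, List.nodup_singleton v, ?_⟩
        intro a ha b hb
        rw [List.mem_singleton] at hb
        subst hb
        exact fun h => hmem (h ▸ ha)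
      have h1 : (p u).concat huv = p v := hpath_eq _ _ hq (hp v)
      have h2 := congrArg SimpleGraph.Walk.length h1
      rw [SimpleGraph.Walk.length_concat] at h2
      omega
  refine ⟨fun w => decide (Even (p w).length), ?_⟩
  intro u v huv
  simp only [ne_eq, decide_eq_decide]
  rcases step u v huv with h | h <;> rw [h, Nat.even_add_one] <;> tauto

/-- The graph `R` with all edges at `r` removed. -/
@[reducible]
def Gm (R : SimpleGraph V) (r : V) : SimpleGraph V where
  Adj x y := R.Adj x y ∧ x ≠ r ∧ y ≠ r
  symm := ⟨fun x y ⟨h, h1, h2⟩ => ⟨h.symm, h2, h1⟩⟩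
  loopless := ⟨fun x ⟨h, _, _⟩ => R.loopless.irrefl x h⟩

lemma Gm_le (R : SimpleGraph V) (r : V) : Gm R r ≤ R := fun _ _ h => h.1

lemma Gm_walk_support {R : SimpleGraph V} {r : V} :
    ∀ {x y : V} (w : (Gm R r).Walk x y), x ≠ r → r ∉ w.support := by
  intro x y w
  induction w with
  | nil => intro hx; simp [Ne.symm hx]
  | cons h p ih =>
    intro hx
    rw [SimpleGraph.Walk.support_cons, List.mem_cons]
    push_neg
    exact ⟨Ne.symm hx, ih h.2.2⟩

lemma Gm_reach_ne {R : SimpleGraph V} {r : V} {x y : V}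
    (h : (Gm R r).Reachable x y) (hx : x ≠ r) : y ≠ r := by
  obtain ⟨w⟩ := h
  intro hy
  subst hy
  exact Gm_walk_support w hx w.end_mem_support

lemma Gm_path_in_R {R : SimpleGraph V} {r : V} {x y : V}
    (h : (Gm R r).Reachable x y) (hx : x ≠ r) :
    ∃ q : R.Walk x y, q.IsPath ∧ r ∉ q.support := by
  classical
  obtain ⟨w⟩ := h
  have hedge : ∀ e ∈ (w.bypass).edges, e ∈ R.edgeSet :=
    fun e he => (SimpleGraph.edgeSet_mono (Gm_le R r)) ((w.bypass).edges_subset_edgeSet he)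
  refine ⟨(w.bypass).transfer R hedge, (w.bypass_isPath).transfer hedge, ?_⟩
  rw [SimpleGraph.Walk.support_transfer]
  intro hc
  exact Gm_walk_support w hx (w.support_bypass_subset hc)

/-- In a tree, two distinct neighbors of `r` cannot be connected avoiding `r`. -/
lemma no_two_nbrs {R : SimpleGraph V} (htree : R.IsTree) {r t₁ t₂ : V}
    (h1 : R.Adj r t₁) (h2 : R.Adj r t₂) (hne : t₁ ≠ t₂)
    (hreach : (Gm R r).Reachable t₁ t₂) : False := by
  obtain ⟨q, hq, hrq⟩ := Gm_path_in_R hreach h1.ne'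
  let q2 : R.Walk t₁ t₂ := SimpleGraph.Walk.cons h1.symm (SimpleGraph.Walk.cons h2 SimpleGraph.Walk.nil)
  have hq2 : q2.IsPath := by
    simp [q2, SimpleGraph.Walk.cons_isPath_iff, h1.ne', h2.ne', h2.ne, hne, h1.ne]
  have heq : q = q2 := (htree.existsUnique_path t₁ t₂).unique hq hq2
  apply hrq
  rw [heq]
  simp [q2]

/-- Trees have no "triangles": if `x-y-z` is a path with `x ≠ z` then `x` and `z`
are not adjacent. -/
lemma tree_nadj {R : SimpleGraph V} (htree : R.IsTree) {x y z : V}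
    (hxy : R.Adj x y) (hyz : R.Adj y z) (hxz : x ≠ z) : ¬ R.Adj x z := by
  intro h
  have p1 : (SimpleGraph.Walk.cons h SimpleGraph.Walk.nil : R.Walk x z).IsPath := by
    simp [SimpleGraph.Walk.cons_isPath_iff, hxz]
  have p2 : (SimpleGraph.Walk.cons hxy (SimpleGraph.Walk.cons hyz SimpleGraph.Walk.nil) :
      R.Walk x z).IsPath := by
    simp [SimpleGraph.Walk.cons_isPath_iff, hxy.ne, hyz.ne, hxz]
  have heq := (htree.existsUnique_path x z).unique p1 p2
  have := congrArg SimpleGraph.Walk.length heq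
  simp at this

end Stmt5Aux

open Stmt5Aux

theorem stmt_5 {V : Type*} [Fintype V] (s : ℕ) (hs : 1 ≤ s) (R : SimpleGraph V)
    (htree : R.IsTree) (hfree : HFree (sP1P3 s) R) (r : V)
    (hr : 3 ≤ (R.neighborSet r).ncard)
    (hsub : ∃ v : {u : V // u ≠ r},
      2 ≤ ((R.induce {u : V | u ≠ r}).neighborSet v).ncard) :
    Fintype.card V ≤ 4 * s - 2 := by
  classical
  obtain ⟨c, hc⟩ := tree_coloring R htree
  obtain ⟨⟨v₀, hv₀r⟩, hv⟩ := hsub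
  -- extract two neighbors a b of v₀ avoiding r
  obtain ⟨a', b', ha', hb', hab'⟩ :=
    (Set.one_lt_ncard_iff (Set.toFinite _)).mp (lt_of_lt_of_le one_lt_two hv)
  have hva : R.Adj v₀ (a' : V) := ha'
  have hvb : R.Adj v₀ (b' : V) := hb'
  have har : (a' : V) ≠ r := a'.2
  have hbr : (b' : V) ≠ r := b'.2
  have habne : (a' : V) ≠ (b' : V) := fun h => hab' (Subtype.ext h)
  set a : V := (a' : V) with ha_def
  set b : V := (b' : V) with hb_def
  -- the component of v₀ in R - r
  set T : Set V := {w | (Gm R r).Reachable v₀ w} with hT_def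
  have hmemT : ∀ {w : V}, w ∈ T ↔ (Gm R r).Reachable v₀ w := Iff.rfl
  have hrT : r ∉ T := fun h => (Gm_reach_ne h hv₀r) rfl
  have haT : a ∈ T := (SimpleGraph.Adj.reachable (⟨hva, hv₀r, har⟩ : (Gm R r).Adj v₀ a))
  have hbT : b ∈ T := (SimpleGraph.Adj.reachable (⟨hvb, hv₀r, hbr⟩ : (Gm R r).Adj v₀ b))
  have hvT : v₀ ∈ T := SimpleGraph.Reachable.refl _
  have hTr_ne : ∀ w ∈ T, w ≠ r := fun w hw => Gm_reach_ne hw hv₀r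
  -- at most one neighbor of r in T
  have hTN : (T ∩ R.neighborSet r).ncard ≤ 1 := by
    rw [Set.ncard_le_one (Set.toFinite _)]
    rintro x ⟨hxT, hxN⟩ y ⟨hyT, hyN⟩
    by_contra hne
    exact no_two_nbrs htree hxN hyN hne (hxT.symm.trans hyT)
  -- two neighbors of r outside T
  have hM : 2 ≤ (R.neighborSet r \ T).ncard := by
    have hsubN : R.neighborSet r ⊆ (T ∩ R.neighborSet r) ∪ (R.neighborSet r \ T) := by
      intro w hw
      by_cases hwT : w ∈ T
      · exact Or.inl ⟨hwT, hw⟩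
      · exact Or.inr ⟨hw, hwT⟩
    have := Set.ncard_le_ncard hsubN (Set.toFinite _)
    have := Set.ncard_union_le (T ∩ R.neighborSet r) (R.neighborSet r \ T)
    omega
  obtain ⟨u₂, u₃, hu₂, hu₃, hu₂₃⟩ :=
    (Set.one_lt_ncard_iff (Set.toFinite _)).mp (lt_of_lt_of_le one_lt_two hM)
  have hru₂ : R.Adj r u₂ := hu₂.1
  have hru₃ : R.Adj r u₃ := hu₃.1
  have hu₂T : u₂ ∉ T := hu₂.2
  have hu₃T : u₃ ∉ T := hu₃.2
  have hu₂r : u₂ ≠ r := hru₂.ne'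
  have hu₃r : u₃ ≠ r := hru₃.ne'
  -- non-adjacencies from acyclicity
  have habR : ¬ R.Adj a b := tree_nadj htree hva.symm hvb habne
  have hu₂₃R : ¬ R.Adj u₂ u₃ := tree_nadj htree hru₂.symm hru₃ hu₂₃
  -- the two "far" sets
  set S₁ : Set V := {w | w ≠ a ∧ w ≠ v₀ ∧ w ≠ b ∧
    ¬ R.Adj w a ∧ ¬ R.Adj w v₀ ∧ ¬ R.Adj w b} with hS₁_def
  set S₂ : Set V := {w | w ≠ u₂ ∧ w ≠ r ∧ w ≠ u₃ ∧
    ¬ R.Adj w u₂ ∧ ¬ R.Adj w r ∧ ¬ R.Adj w u₃} with hS₂_def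
  -- generic bound via 2-coloring
  have Sbound : ∀ (x y z : V), R.Adj x y → R.Adj y z → ¬ R.Adj x z → x ≠ z →
      ∀ S : Set V, (∀ w ∈ S, w ≠ x ∧ w ≠ y ∧ w ≠ z ∧
        ¬ R.Adj w x ∧ ¬ R.Adj w y ∧ ¬ R.Adj w z) → S.ncard + 2 ≤ 2 * s := by
    intro x y z hxy hyz hxz hxzne S hS
    have hsplit : S ⊆ (S ∩ c ⁻¹' {true}) ∪ (S ∩ c ⁻¹' {false}) := by
      intro w hw
      rcases Bool.eq_false_or_eq_true (c w) with h | h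
      · exact Or.inl ⟨hw, by simpa using h⟩
      · exact Or.inr ⟨hw, by simpa using h⟩
    have hclass : ∀ bo : Bool, (S ∩ c ⁻¹' {bo}).ncard < s := by
      intro bo
      refine key s R hfree x y z hxy hyz hxz hxzne _ ?_ ?_
      · rintro p ⟨-, hp⟩ q ⟨-, hq⟩ hpq hadj
        apply hc p q hadj
        simp only [Set.mem_preimage, Set.mem_singleton_iff] at hp hq
        rw [hp, hq]
      · rintro w ⟨hw, -⟩
        exact hS w hw
    have h1 := hclass true
    have h2 := hclass false
    have h3 := Set.ncard_le_ncard hsplit (Set.toFinite _)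
    have h4 := Set.ncard_union_le (S ∩ c ⁻¹' {true}) (S ∩ c ⁻¹' {false})
    omega
  have hS₁b : S₁.ncard + 2 ≤ 2 * s := by
    refine Sbound a v₀ b hva.symm hvb habR habne S₁ ?_
    intro w hw
    exact hw
  have hS₂b : S₂.ncard + 2 ≤ 2 * s := by
    refine Sbound u₂ r u₃ hru₂.symm hru₃ hu₂₃R hu₂₃ S₂ ?_
    intro w hw
    exact hw
  -- outside {r} ∪ T lies inside S₁
  have hRest : {w : V | w ≠ r ∧ w ∉ T} ⊆ S₁ := by
    rintro w ⟨hwr, hwT⟩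
    have hadjT : ∀ t ∈ T, ¬ R.Adj w t := by
      intro t ht hadj
      exact hwT (ht.trans (SimpleGraph.Adj.reachable
        (⟨hadj.symm, hTr_ne t ht, hwr⟩ : (Gm R r).Adj t w)).symm.symm)
    exact ⟨fun h => hwT (h ▸ haT), fun h => hwT (h ▸ hvT), fun h => hwT (h ▸ hbT),
      hadjT a haT, hadjT v₀ hvT, hadjT b hbT⟩
  -- T minus the neighbor of r lies inside S₂
  have hTS₂ : T \ R.neighborSet r ⊆ S₂ := by
    rintro w ⟨hwT, hwN⟩
    have hnadj : ∀ u, u ∉ T → u ≠ r → ¬ R.Adj w u := by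
      intro u huT hur hadj
      exact huT (hwT.trans (SimpleGraph.Adj.reachable
        (⟨hadj, hTr_ne w hwT, hur⟩ : (Gm R r).Adj w u)))
    refine ⟨fun h => hu₂T (h ▸ hwT), hTr_ne w hwT, fun h => hu₃T (h ▸ hwT),
      hnadj u₂ hu₂T hu₂r, ?_, hnadj u₃ hu₃T hu₃r⟩
    intro hadj
    exact hwN hadj.symm
  -- counting
  have hcover : (Set.univ : Set V) ⊆ {r} ∪ T ∪ {w : V | w ≠ r ∧ w ∉ T} := by
    intro w _
    by_cases hwr : w = r
    · exact Or.inl (Or.inl hwr)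
    · by_cases hwT : w ∈ T
      · exact Or.inl (Or.inr hwT)
      · exact Or.inr ⟨hwr, hwT⟩
  have hcard : Fintype.card V = (Set.univ : Set V).ncard := by
    rw [Set.ncard_univ, Nat.card_eq_fintype_card]
  have hTbound : T.ncard ≤ (T ∩ R.neighborSet r).ncard + (T \ R.neighborSet r).ncard := by
    have hsubT : T ⊆ (T ∩ R.neighborSet r) ∪ (T \ R.neighborSet r) := by
      intro w hw
      by_cases h : w ∈ R.neighborSet r
      · exact Or.inl ⟨hw, h⟩
      · exact Or.inr ⟨hw, h⟩
    have := Set.ncard_le_ncard hsubT (Set.toFinite _)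
    have := Set.ncard_union_le (T ∩ R.neighborSet r) (T \ R.neighborSet r)
    omega
  have h1 := Set.ncard_le_ncard hcover (Set.toFinite _)
  have h2 := Set.ncard_union_le ({r} ∪ T) {w : V | w ≠ r ∧ w ∉ T}
  have h3 := Set.ncard_union_le ({r} : Set V) T
  have h4 : ({r} : Set V).ncard = 1 := Set.ncard_singleton r
  have h5 := Set.ncard_le_ncard hRest (Set.toFinite _)
  have h6 := Set.ncard_le_ncard hTS₂ (Set.toFinite _)
  rw [hcard]
  omega
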